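/- Let V ⊆ ℂⁿ be a closed irreducible algebraic subvariety, and suppose there exists a nonzero vector v ∈ ℂⁿ and infinitely many integers m such that V + m·v = V (V is invariant under translation by m·v for infinitely many m ∈ ℤ). If dim V = 1, then V is an affine line with direction v. -/

import Mathlib

noncomputable def expMap (n : ℕ) : (Fin n → ℂ) → (Fin n → ℂˣ) :=
  fun z i => Units.mk0 (Complex.exp (2 * Real.pi * Complex.I * z i)) (Complex.exp_ne_zero _)

/-- Coercion from `(ℂ*)ⁿ` to `ℂⁿ`. -/
def uCoe (n : ℕ) : (Fin n → ℂˣ) → (Fin n → ℂ) := fun x i => (x i : ℂ)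

/-- An algebraic subset of the affine space `ℂⁿ`: the zero locus of an ideal of polynomials. -/
def IsAlgSet {n : ℕ} (V : Set (Fin n → ℂ)) : Prop :=
  ∃ I : Ideal (MvPolynomial (Fin n) ℂ), V = MvPolynomial.zeroLocus ℂ I

/-- An algebraic subset of the torus `(ℂ*)ⁿ`: the trace on `(ℂ*)ⁿ` of an algebraic subset of
`ℂⁿ` (equivalently, the zero locus of a family of Laurent polynomials). -/
def IsAlgSetT {n : ℕ} (W : Set (Fin n → ℂˣ)) : Prop :=
  ∃ I : Ideal (MvPolynomial (Fin n) ℂ), W = uCoe n ⁻¹' MvPolynomial.zeroLocus ℂ I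

/-- An irreducible algebraic subvariety of `ℂⁿ`. -/
def IsIrredAlgSet {n : ℕ} (V : Set (Fin n → ℂ)) : Prop :=
  IsAlgSet V ∧ V.Nonempty ∧
    ∀ V₁ V₂ : Set (Fin n → ℂ), IsAlgSet V₁ → IsAlgSet V₂ → V = V₁ ∪ V₂ → V = V₁ ∨ V = V₂

/-- An irreducible algebraic subvariety of `(ℂ*)ⁿ`. -/
def IsIrredAlgSetT {n : ℕ} (W : Set (Fin n → ℂˣ)) : Prop :=
  IsAlgSetT W ∧ W.Nonempty ∧
    ∀ W₁ W₂ : Set (Fin n → ℂˣ), IsAlgSetT W₁ → IsAlgSetT W₂ → W = W₁ ∪ W₂ → W = W₁ ∨ W = W₂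

/-- Dimension of an algebraic set: the Krull dimension of the poset of irreducible algebraic
subsets contained in it. -/
noncomputable def algDim {n : ℕ} (V : Set (Fin n → ℂ)) : WithBot ℕ∞ :=
  Order.krullDim {W : Set (Fin n → ℂ) // IsIrredAlgSet W ∧ W ⊆ V}

noncomputable def algDimT {n : ℕ} (W : Set (Fin n → ℂˣ)) : WithBot ℕ∞ :=
  Order.krullDim {W' : Set (Fin n → ℂˣ) // IsIrredAlgSetT W' ∧ W' ⊆ W}

/-- A linear subspace of `ℂⁿ` spanned by integer (equivalently, rational) vectors. -/
def IsIntSpanned {n : ℕ} (L : Submodule ℂ (Fin n → ℂ)) : Prop :=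
  ∃ S : Set (Fin n → ℂ), (∀ v ∈ S, ∀ i, ∃ m : ℤ, v i = (m : ℂ)) ∧ L = Submodule.span ℂ S

/-- A subtorus of `(ℂ*)ⁿ`: the image under `exp` of a linear subspace of `ℂⁿ` spanned by
integer vectors; equivalently, an algebraic subgroup isomorphic to some `(ℂ*)ᵖ`. -/
def IsSubtorus {n : ℕ} (T : Set (Fin n → ℂˣ)) : Prop :=
  ∃ L : Submodule ℂ (Fin n → ℂ), IsIntSpanned L ∧ T = expMap n '' (L : Set (Fin n → ℂ))


section Helpers

noncomputable def linePoly {n : ℕ} (a v : Fin n → ℂ) (p : MvPolynomial (Fin n) ℂ) :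
    Polynomial ℂ :=
  MvPolynomial.eval₂ Polynomial.C
    (fun i => Polynomial.C (a i) + Polynomial.C (v i) * Polynomial.X) p

lemma linePoly_eval {n : ℕ} (a v : Fin n → ℂ) (p : MvPolynomial (Fin n) ℂ) (t : ℂ) :
    (linePoly a v p).eval t = MvPolynomial.eval (a + t • v) p := by
  have h := MvPolynomial.eval₂_comp_left (Polynomial.evalRingHom t)
    (Polynomial.C : ℂ →+* Polynomial ℂ)
    (fun i => Polynomial.C (a i) + Polynomial.C (v i) * Polynomial.X) p
  have h1 : (Polynomial.evalRingHom t).comp (Polynomial.C : ℂ →+* Polynomial ℂ)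
      = RingHom.id ℂ := by ext c; simp
  have h2 : (⇑(Polynomial.evalRingHom t)) ∘
      (fun i => Polynomial.C (a i) + Polynomial.C (v i) * Polynomial.X)
      = fun i : Fin n => a i + v i * t := by
    funext i; simp
  have h3 : (a + t • v) = fun i : Fin n => a i + v i * t := by
    funext i; simp [mul_comm]
  rw [h1, h2] at h
  show (Polynomial.evalRingHom t) _ = _
  rw [linePoly, h, h3, MvPolynomial.eval, MvPolynomial.coe_eval₂Hom]

lemma mem_zeroLocus_span {n : ℕ} {S : Set (MvPolynomial (Fin n) ℂ)} {x : Fin n → ℂ} :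
    x ∈ MvPolynomial.zeroLocus ℂ (Ideal.span S) ↔ ∀ p ∈ S, MvPolynomial.eval x p = 0 := by
  constructor
  · intro hx p hp
    exact hx p (Ideal.subset_span hp)
  · intro h p hp
    refine Submodule.span_induction (fun q hq => h q hq) (by simp) ?_ ?_ hp
    · intro q r _ _ hq hr; simp [MvPolynomial.coe_aeval_eq_eval] at hq hr ⊢; simp [hq, hr]
    · intro c q _ hq; simp [MvPolynomial.coe_aeval_eq_eval] at hq ⊢; simp [smul_eq_mul, hq]

/-- The set of parameters `t` with `a + t • v` in an algebraic set is finite or everything. -/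
lemma alg_line_all {n : ℕ} {W : Set (Fin n → ℂ)} (hW : IsAlgSet W) {a v : Fin n → ℂ}
    (h : {t : ℂ | a + t • v ∈ W}.Infinite) : ∀ t : ℂ, a + t • v ∈ W := by
  obtain ⟨I, rfl⟩ := hW
  intro t
  intro p hp
  have hz : linePoly a v p = 0 := by
    apply Polynomial.eq_zero_of_infinite_isRoot
    apply h.mono
    intro s hs
    simp only [Set.mem_setOf_eq, Polynomial.IsRoot, linePoly_eval]
    exact hs p hp
  have := linePoly_eval a v p t
  rw [hz] at this
  simpa using this.symm

lemma singleton_irred {n : ℕ} (a : Fin n → ℂ) : IsIrredAlgSet {a} := by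
  refine ⟨⟨Ideal.span (Set.range (fun i => MvPolynomial.X i - MvPolynomial.C (a i))), ?_⟩,
    ⟨a, rfl⟩, ?_⟩
  · ext x
    simp only [Set.mem_singleton_iff, mem_zeroLocus_span, Set.forall_mem_range, map_sub,
      MvPolynomial.eval_X, MvPolynomial.eval_C, sub_eq_zero]
    exact ⟨fun h => by subst h; simp, fun h => funext h⟩
  · rintro V₁ V₂ _ _ hu
    have ha : a ∈ V₁ ∪ V₂ := hu ▸ rfl
    rcases ha with ha | ha
    · left
      apply subset_antisymm (Set.singleton_subset_iff.2 ha)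
      intro x hx
      have : x ∈ ({a} : Set _) := hu ▸ Set.mem_union_left _ hx
      exact this
    · right
      apply subset_antisymm (Set.singleton_subset_iff.2 ha)
      intro x hx
      have : x ∈ ({a} : Set _) := hu ▸ Set.mem_union_right _ hx
      exact this

lemma line_isAlgSet {n : ℕ} (a v : Fin n → ℂ) (hv : v ≠ 0) :
    IsAlgSet {x : Fin n → ℂ | ∃ t : ℂ, x = a + t • v} := by
  obtain ⟨i₀, hi₀⟩ : ∃ i, v i ≠ 0 := by
    by_contra h; push_neg at h; exact hv (funext h)
  refine ⟨Ideal.span (Set.range (fun j => MvPolynomial.C (v i₀) *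
      (MvPolynomial.X j - MvPolynomial.C (a j)) -
      MvPolynomial.C (v j) * (MvPolynomial.X i₀ - MvPolynomial.C (a i₀)))), ?_⟩
  ext x
  simp only [Set.mem_setOf_eq, mem_zeroLocus_span, Set.forall_mem_range, map_sub, map_mul,
    MvPolynomial.eval_X, MvPolynomial.eval_C, sub_eq_zero]
  constructor
  · rintro ⟨t, rfl⟩ j
    simp only [Pi.add_apply, Pi.smul_apply, smul_eq_mul]
    ring
  · intro h
    refine ⟨(x i₀ - a i₀) / v i₀, funext fun j => ?_⟩
    have hj := h j
    simp only [Pi.add_apply, Pi.smul_apply, smul_eq_mul]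
    field_simp
    linear_combination hj

lemma line_irred {n : ℕ} (a v : Fin n → ℂ) (hv : v ≠ 0) :
    IsIrredAlgSet {x : Fin n → ℂ | ∃ t : ℂ, x = a + t • v} := by
  refine ⟨line_isAlgSet a v hv, ⟨a, 0, by simp⟩, ?_⟩
  intro V₁ V₂ h₁ h₂ hu
  set ℓ : Set (Fin n → ℂ) := {x | ∃ t : ℂ, x = a + t • v} with hℓ
  have hmem : ∀ t : ℂ, a + t • v ∈ V₁ ∪ V₂ := fun t => hu ▸ ⟨t, rfl⟩
  have : {t : ℂ | a + t • v ∈ V₁}.Infinite ∨ {t : ℂ | a + t • v ∈ V₂}.Infinite := by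
    by_contra h
    push_neg at h
    have h1 := h.1
    have h2 := h.2
    have : (Set.univ : Set ℂ) ⊆ {t : ℂ | a + t • v ∈ V₁} ∪ {t : ℂ | a + t • v ∈ V₂} := by
      intro t _
      rcases hmem t with h | h
      · exact Or.inl h
      · exact Or.inr h
    exact Set.infinite_univ ((h1.union h2).subset this)
  rcases this with h | h
  · left
    apply subset_antisymm
    · rintro x ⟨t, rfl⟩
      exact alg_line_all h₁ h t
    · rw [hu]; exact Set.subset_union_left
  · right
    apply subset_antisymm
    · rintro x ⟨t, rfl⟩
      exact alg_line_all h₂ h t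
    · rw [hu]; exact Set.subset_union_right

end Helpers

/-- A closed irreducible algebraic curve `V ⊆ ℂⁿ` invariant under translation by `m • v` for
infinitely many integers `m` (with `v ≠ 0`) is an affine line with direction `v`. -/
theorem invariant_curve_is_line {n : ℕ} (V : Set (Fin n → ℂ)) (v : Fin n → ℂ) (hv : v ≠ 0)
    (hV : IsIrredAlgSet V) (hdim : algDim V = 1)
    (hinv : {m : ℤ | (fun x => x + (m : ℂ) • v) '' V = V}.Infinite) :
    ∃ a : Fin n → ℂ, V = {x | ∃ t : ℂ, x = a + t • v} := by
  obtain ⟨a, ha⟩ := hV.2.1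
  refine ⟨a, ?_⟩
  set ℓ : Set (Fin n → ℂ) := {x | ∃ t : ℂ, x = a + t • v} with hℓdef
  have hparam : {t : ℂ | a + t • v ∈ V}.Infinite := by
    have hsub : ((fun m : ℤ => (m : ℂ)) ''
        {m : ℤ | (fun x => x + (m : ℂ) • v) '' V = V}) ⊆ {t : ℂ | a + t • v ∈ V} := by
      rintro t ⟨m, hm, rfl⟩
      simp only [Set.mem_setOf_eq]
      rw [← hm]
      exact ⟨a, ha, rfl⟩
    exact (hinv.image (fun x _ y _ h => by exact_mod_cast h)).mono hsub
  have hlV : ℓ ⊆ V := by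
    rintro x ⟨t, rfl⟩
    exact alg_line_all hV.1 hparam t
  by_contra hne
  have hssub : ℓ ⊂ V := HasSubset.Subset.ssubset_of_ne hlV (fun h => hne h.symm)
  have hal : ({a} : Set (Fin n → ℂ)) ⊂ ℓ := by
    refine HasSubset.Subset.ssubset_of_ne (Set.singleton_subset_iff.2 ⟨0, by simp⟩) ?_
    intro h
    have : a + v ∈ ℓ := ⟨1, by simp⟩
    rw [← h] at this
    have hv0 : a + v = a := this
    exact hv (by simpa using hv0)
  let x0 : {W : Set (Fin n → ℂ) // IsIrredAlgSet W ∧ W ⊆ V} :=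
    ⟨{a}, singleton_irred a, Set.singleton_subset_iff.2 ha⟩
  let x1 : {W : Set (Fin n → ℂ) // IsIrredAlgSet W ∧ W ⊆ V} :=
    ⟨ℓ, line_irred a v hv, hlV⟩
  let x2 : {W : Set (Fin n → ℂ) // IsIrredAlgSet W ∧ W ⊆ V} :=
    ⟨V, hV, subset_rfl⟩
  have h01 : x0 < x1 := by
    rw [Subtype.mk_lt_mk]
    exact hal
  have h12 : x1 < x2 := by
    rw [Subtype.mk_lt_mk]
    exact hssub
  let c : LTSeries {W : Set (Fin n → ℂ) // IsIrredAlgSet W ∧ W ⊆ V} :=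
    ⟨2, ![x0, x1, x2], by
      intro i
      fin_cases i
      · exact h01
      · exact h12⟩
  have hle := Order.LTSeries.length_le_krullDim c
  rw [show c.length = 2 from rfl] at hle
  rw [show Order.krullDim {W : Set (Fin n → ℂ) // IsIrredAlgSet W ∧ W ⊆ V} = algDim V from rfl,
    hdim] at hle
  norm_num at hle
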